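/- arXiv:2406.09852 — 3 statements merged into one kernel-verified Lean document; each statement's English description precedes it below -/
import Mathlib

section
/- Let A ∈ ℝ_{≥0}^{p×p} be lower triangular with diagonal entries 1, C := A − I_p, and for i ∈ {1,…,p} define η_i := max{ m ∈ {1,…,p} : there exists j ∈ {1,…,p} with (C^{m−1})_{i,j} > 0 }. If (C^m)_{i,j} > 0 for some i, j ∈ {1,…,p} and m ∈ {0,1,…,p−1}, then η_i ≥ η_j + m. -/
/-- If `A` is a nonnegative `p × p` lower triangular real matrix with unit diagonal,
`C = A - I`, and `η_i = max{ m ∈ {1,…,p} : ∃ j, (C^(m-1))_{i,j} > 0 }`, then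
`(C^m)_{i,j} > 0` for some `m ∈ {0,…,p-1}` implies `η_i ≥ η_j + m`. -/
theorem eta_ineq (p : ℕ) (A : Matrix (Fin p) (Fin p) ℝ)
    (hnonneg : ∀ i j : Fin p, 0 ≤ A i j)
    (hlow : ∀ i j : Fin p, i < j → A i j = 0)
    (hdiag : ∀ i : Fin p, A i i = 1)
    (η : Fin p → ℕ)
    (hη : ∀ i : Fin p,
      η i = sSup {m : ℕ | m ∈ Finset.Icc 1 p ∧ ∃ j : Fin p, 0 < ((A - 1) ^ (m - 1)) i j})
    (i j : Fin p) (m : ℕ) (hm : m ≤ p - 1)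
    (h : 0 < ((A - 1) ^ m) i j) :
    η j + m ≤ η i := by
  set C : Matrix (Fin p) (Fin p) ℝ := A - 1 with hC
  have hp : 0 < p := i.pos
  -- C is entrywise nonnegative
  have hCnn : ∀ a b : Fin p, 0 ≤ C a b := by
    intro a b
    simp only [hC, Matrix.sub_apply, Matrix.one_apply]
    by_cases hab : a = b
    · simp [hab, hdiag b]
    · simp [hab, hnonneg a b]
  -- C is strictly lower triangular
  have hClow : ∀ a b : Fin p, a ≤ b → C a b = 0 := by
    intro a b hab
    simp only [hC, Matrix.sub_apply, Matrix.one_apply]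
    rcases lt_or_eq_of_le hab with hlt | heq
    · simp [hlow a b hlt, Fin.ne_of_lt hlt]
    · simp [heq, hdiag b]
  -- powers of C are nonnegative
  have hpow : ∀ (q : ℕ) (a b : Fin p), 0 ≤ (C ^ q) a b := by
    intro q
    induction q with
    | zero => intro a b; simp [Matrix.one_apply]; positivity
    | succ n ih =>
      intro a b
      rw [pow_succ, Matrix.mul_apply]
      exact Finset.sum_nonneg fun k _ => mul_nonneg (ih a k) (hCnn k b)
  -- support condition: nonzero entries of C^q require b + q ≤ a
  have hsupp : ∀ (q : ℕ) (a b : Fin p), (C ^ q) a b ≠ 0 → (b : ℕ) + q ≤ (a : ℕ) := by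
    intro q
    induction q with
    | zero =>
      intro a b hab
      simp only [pow_zero, Matrix.one_apply] at hab
      by_cases hab' : a = b
      · simp [hab']
      · simp [hab'] at hab
    | succ n ih =>
      intro a b hab
      rw [pow_succ, Matrix.mul_apply] at hab
      obtain ⟨k, _, hk⟩ := Finset.exists_ne_zero_of_sum_ne_zero hab
      have h1 := ih a k (left_ne_zero_of_mul hk)
      have h2 : C k b ≠ 0 := right_ne_zero_of_mul hk
      have h3 : (b : ℕ) < (k : ℕ) := by
        by_contra hc
        exact h2 (hClow k b (by exact_mod_cast not_lt.mp hc))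
      omega
  -- the defining sets
  have hbdd : ∀ a : Fin p, BddAbove
      {m : ℕ | m ∈ Finset.Icc 1 p ∧ ∃ j : Fin p, 0 < ((A - 1) ^ (m - 1)) a j} := by
    intro a
    exact ⟨p, fun x hx => (Finset.mem_Icc.mp hx.1).2⟩
  have hne : ∀ a : Fin p, 1 ∈
      {m : ℕ | m ∈ Finset.Icc 1 p ∧ ∃ j : Fin p, 0 < ((A - 1) ^ (m - 1)) a j} := by
    intro a
    refine ⟨Finset.mem_Icc.mpr ⟨le_refl 1, hp⟩, a, ?_⟩
    simp [Matrix.one_apply]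
  -- η j is attained
  have hmemj : η j ∈
      {m : ℕ | m ∈ Finset.Icc 1 p ∧ ∃ l : Fin p, 0 < ((A - 1) ^ (m - 1)) j l} := by
    rw [hη j]
    exact Nat.sSup_mem ⟨1, hne j⟩ (hbdd j)
  obtain ⟨hjIcc, l, hl⟩ := hmemj
  obtain ⟨hk1, hkp⟩ := Finset.mem_Icc.mp hjIcc
  set k := η j with hkdef
  -- positivity of the product entry
  have hprod : 0 < (C ^ (m + (k - 1))) i l := by
    rw [pow_add, Matrix.mul_apply]
    apply Finset.sum_pos' (fun t _ => mul_nonneg (hpow m i t) (hpow (k - 1) t l))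
    exact ⟨j, Finset.mem_univ j, mul_pos h hl⟩
  -- bound: m + k ≤ p
  have hle : (l : ℕ) + (m + (k - 1)) ≤ (i : ℕ) := hsupp _ i l (ne_of_gt hprod)
  have hip : (i : ℕ) < p := i.isLt
  have hmk : m + k ≤ p := by omega
  -- conclude
  have hmem : m + k ∈
      {m' : ℕ | m' ∈ Finset.Icc 1 p ∧ ∃ l : Fin p, 0 < ((A - 1) ^ (m' - 1)) i l} := by
    refine ⟨Finset.mem_Icc.mpr ⟨by omega, hmk⟩, l, ?_⟩
    have : m + k - 1 = m + (k - 1) := by omega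
    rw [this]
    exact hprod
  have := le_csSup (hbdd i) hmem
  rw [← hη i] at this
  omega
end

section
/- Let (X_k)_{k≥0} be a strongly critical p-type GWI process with X₀ = 0, finite second moments, and lower triangular offspring mean matrix A with unit diagonal. Then for each i, E(X_{k,i}) = O(k^{η_i}) as k → ∞, where η_i := max{ m ∈ {1,…,p} : ∃ j with ((A−I_p)^{m−1})_{i,j} > 0 }. -/
open MeasureTheory ProbabilityTheory

open scoped ENNReal NNReal

section Helpers
variable {Ω : Type*} [MeasurableSpace Ω] {μ : Measure Ω} [IsProbabilityMeasure μ]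

omit [MeasurableSpace Ω] in
lemma meas_rand_sum {m : MeasurableSpace Ω} (N : Ω → ℕ) (Y : ℕ → Ω → ℕ)
    (hN : Measurable[m] N) (hY : ∀ j, Measurable[m] (Y j)) :
    Measurable[m] (fun ω => ∑ j ∈ Finset.range (N ω), Y j ω) := by
  have : (fun ω => ∑ j ∈ Finset.range (N ω), Y j ω)
      = (fun q : (ℕ → ℕ) × ℕ => ∑ j ∈ Finset.range q.2, q.1 j)
        ∘ (fun ω => (fun j => Y j ω, N ω)) := rfl
  rw [this]
  refine Measurable.comp ?_ ((measurable_pi_lambda _ hY).prodMk hN)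
  refine measurable_from_prod_countable_left fun n => ?_
  show Measurable fun x : ℕ → ℕ => ∑ j ∈ Finset.range n, x j
  exact Finset.measurable_sum _ (fun j _ => measurable_pi_apply j)

lemma cast_eq_tsum_ite (n : ℕ) : (n : ℝ≥0∞) = ∑' j : ℕ, (if j < n then (1:ℝ≥0∞) else 0) := by
  rw [tsum_eq_sum (s := Finset.range n) (fun j hj => by
    rw [if_neg (fun h => hj (Finset.mem_range.mpr h))])]
  rw [Finset.sum_congr rfl (fun j hj => if_pos (Finset.mem_range.mp hj))]
  simp

lemma lint_ite_lt (N : Ω → ℕ) (hN : Measurable N) (j : ℕ) :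
    ∫⁻ ω, (if j < N ω then (1:ℝ≥0∞) else 0) ∂μ = μ {ω | j < N ω} := by
  have h1 : (fun ω => if j < N ω then (1:ℝ≥0∞) else 0)
      = Set.indicator {ω | j < N ω} (fun _ => (1:ℝ≥0∞)) := by
    funext ω; by_cases h : j < N ω <;> simp [Set.indicator, h]
  rw [h1]; exact lintegral_indicator_one (hN measurableSet_Ioi)

lemma lintegral_nat_cast (N : Ω → ℕ) (hN : Measurable N) :
    ∫⁻ ω, (N ω : ℝ≥0∞) ∂μ = ∑' j : ℕ, μ {ω | j < N ω} := by
  calc ∫⁻ ω, (N ω : ℝ≥0∞) ∂μ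
      = ∫⁻ ω, ∑' j : ℕ, (if j < N ω then (1:ℝ≥0∞) else 0) ∂μ :=
        lintegral_congr fun ω => cast_eq_tsum_ite (N ω)
    _ = ∑' j : ℕ, ∫⁻ ω, (if j < N ω then (1:ℝ≥0∞) else 0) ∂μ :=
        lintegral_tsum fun j => ((measurable_of_countable
          (fun n : ℕ => if j < n then (1:ℝ≥0∞) else 0)).comp hN).aemeasurable
    _ = ∑' j : ℕ, μ {ω | j < N ω} := by
        exact tsum_congr fun j => lint_ite_lt N hN j

lemma lintegral_rand_sum (N : Ω → ℕ) (Y : ℕ → Ω → ℕ) (hN : Measurable N)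
    (hY : ∀ j, Measurable (Y j)) (hind : ∀ j, IndepFun N (Y j) μ)
    (a : ℝ≥0∞) (ha : ∀ j, ∫⁻ ω, (Y j ω : ℝ≥0∞) ∂μ = a) :
    ∫⁻ ω, ((∑ j ∈ Finset.range (N ω), Y j ω : ℕ) : ℝ≥0∞) ∂μ
      = a * ∫⁻ ω, (N ω : ℝ≥0∞) ∂μ := by
  have key : ∀ ω, ((∑ j ∈ Finset.range (N ω), Y j ω : ℕ) : ℝ≥0∞)
      = ∑' j : ℕ, (if j < N ω then (1:ℝ≥0∞) else 0) * (Y j ω : ℝ≥0∞) := by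
    intro ω
    push_cast
    rw [tsum_eq_sum (s := Finset.range (N ω)) (fun j hj => by
      rw [if_neg (fun h => hj (Finset.mem_range.mpr h)), zero_mul])]
    exact (Finset.sum_congr rfl (fun j hj => by
      rw [if_pos (Finset.mem_range.mp hj), one_mul])).symm
  have hterm : ∀ j : ℕ, ∫⁻ ω, (if j < N ω then (1:ℝ≥0∞) else 0) * (Y j ω : ℝ≥0∞) ∂μ
      = μ {ω | j < N ω} * a := by
    intro j
    have hgm : Measurable (fun n : ℕ => if j < n then (1:ℝ≥0∞) else 0) :=
      measurable_of_countable _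
    have hcm : Measurable (fun n : ℕ => (n : ℝ≥0∞)) := measurable_of_countable _
    have hindep : IndepFun (fun ω => if j < N ω then (1:ℝ≥0∞) else 0)
        (fun ω => (Y j ω : ℝ≥0∞)) μ := (hind j).comp hgm hcm
    rw [lintegral_mul_eq_lintegral_mul_lintegral_of_indepFun''
      (f := fun ω => if j < N ω then (1:ℝ≥0∞) else 0) (g := fun ω => (Y j ω : ℝ≥0∞))
      ((hgm.comp hN).aemeasurable :
        AEMeasurable (fun ω => if j < N ω then (1:ℝ≥0∞) else 0) μ)
      ((hcm.comp (hY j)).aemeasurable : AEMeasurable (fun ω => (Y j ω : ℝ≥0∞)) μ) hindep]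
    rw [lint_ite_lt N hN j, ha j]
  calc ∫⁻ ω, ((∑ j ∈ Finset.range (N ω), Y j ω : ℕ) : ℝ≥0∞) ∂μ
      = ∫⁻ ω, ∑' j : ℕ, (if j < N ω then (1:ℝ≥0∞) else 0) * (Y j ω : ℝ≥0∞) ∂μ :=
        lintegral_congr key
    _ = ∑' j : ℕ, ∫⁻ ω, (if j < N ω then (1:ℝ≥0∞) else 0) * (Y j ω : ℝ≥0∞) ∂μ :=
        lintegral_tsum fun j => ((((measurable_of_countable
            (fun n : ℕ => if j < n then (1:ℝ≥0∞) else 0)).comp hN).mul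
          ((measurable_of_countable (fun n : ℕ => (n:ℝ≥0∞))).comp (hY j))).aemeasurable :
          AEMeasurable (fun ω => (if j < N ω then (1:ℝ≥0∞) else 0) * (Y j ω : ℝ≥0∞)) μ)
    _ = ∑' j : ℕ, μ {ω | j < N ω} * a := tsum_congr hterm
    _ = a * ∫⁻ ω, (N ω : ℝ≥0∞) ∂μ := by
        rw [ENNReal.tsum_mul_right, lintegral_nat_cast N hN, mul_comm]

end Helpers

section MatHelpers
variable {p : ℕ}

lemma matpow_nonneg (M : Matrix (Fin p) (Fin p) ℝ) (h : ∀ t j, 0 ≤ M t j) :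
    ∀ m t j, 0 ≤ (M ^ m) t j := by
  intro m
  induction m with
  | zero => intro t j; by_cases h' : t = j <;> simp [Matrix.one_apply, h', pow_zero]
  | succ m ih =>
      intro t j
      rw [pow_succ, Matrix.mul_apply]
      exact Finset.sum_nonneg fun r _ => mul_nonneg (ih t r) (h r j)

lemma matpow_strict_lower (M : Matrix (Fin p) (Fin p) ℝ) (h : ∀ r j : Fin p, r ≤ j → M r j = 0) :
    ∀ m (t j : Fin p), (t : ℕ) < (j : ℕ) + m → (M ^ m) t j = 0 := by
  intro m
  induction m with
  | zero =>
      intro t j ht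
      rw [pow_zero, Matrix.one_apply_ne]
      intro h'; rw [h'] at ht; omega
  | succ m ih =>
      intro t j ht
      rw [pow_succ, Matrix.mul_apply]
      refine Finset.sum_eq_zero fun r _ => ?_
      by_cases hr : (t : ℕ) < (r : ℕ) + m
      · rw [ih t r hr, zero_mul]
      · have : (r : ℕ) ≤ (j : ℕ) := by omega
        rw [h r j (by exact_mod_cast Fin.le_def.mpr this), mul_zero]

lemma matpow_eq_zero (M : Matrix (Fin p) (Fin p) ℝ) (h : ∀ r j : Fin p, r ≤ j → M r j = 0)
    {m : ℕ} (hm : p ≤ m) : M ^ m = 0 := by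
  ext t j
  exact matpow_strict_lower M h m t j (by have := t.isLt; omega)

lemma add_one_pow_eq (N : Matrix (Fin p) (Fin p) ℝ) (j : ℕ) :
    (N + 1) ^ j = ∑ m ∈ Finset.range (j + 1), (j.choose m : ℝ) • N ^ m := by
  rw [Commute.add_pow (Commute.one_right N)]
  refine Finset.sum_congr rfl fun m _ => ?_
  rw [one_pow, mul_one]
  rw [← (Nat.cast_commute (j.choose m) (N ^ m)).eq, Nat.cast_smul_eq_nsmul ℝ, nsmul_eq_mul]

lemma sum_smul_mulVec {q : ℕ} (s : Finset ℕ) (c : ℕ → ℝ) (M : ℕ → Matrix (Fin q) (Fin q) ℝ)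
    (b : Fin q → ℝ) (t : Fin q) :
    ((∑ m ∈ s, c m • M m).mulVec b) t = ∑ m ∈ s, c m * ((M m).mulVec b) t := by
  induction s using Finset.induction with
  | empty => simp [Matrix.zero_mulVec]
  | insert x s hx ih =>
      rw [Finset.sum_insert hx, Finset.sum_insert hx, Matrix.add_mulVec, Pi.add_apply, ih,
        Matrix.smul_mulVec, Pi.smul_apply, smul_eq_mul]

end MatHelpers

/-- The `p`-type Galton–Watson process with immigration started from `0`:
`X_k = ∑_{i=1}^p ∑_{j=1}^{X_{k-1,i}} ξ_{k,j,i} + ε_k`. -/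
def gwiX {Ω : Type*} (p : ℕ) (ξ : ℕ → ℕ → Fin p → Ω → (Fin p → ℕ))
    (ε : ℕ → Ω → (Fin p → ℕ)) : ℕ → Ω → (Fin p → ℕ)
  | 0 => fun _ _ => 0
  | k + 1 => fun ω t =>
      (∑ i : Fin p, ∑ j ∈ Finset.range (gwiX p ξ ε k ω i), ξ (k + 1) (j + 1) i ω t)
        + ε (k + 1) ω t

/-- For a strongly critical `p`-type GWI process with `X₀ = 0`, finite second
moments, and lower triangular offspring mean matrix `A` with unit diagonal,
`E(X_{k,i}) = O(k^{η_i})` as `k → ∞`, where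
`η_i = max{ m ∈ {1,…,p} : ∃ j, ((A - I)^(m-1))_{i,j} > 0 }`. -/
theorem gwi_mean_growth {Ω : Type*} [MeasurableSpace Ω]
    (μ : Measure Ω) [IsProbabilityMeasure μ]
    (p : ℕ) (ξ : ℕ → ℕ → Fin p → Ω → (Fin p → ℕ)) (ε : ℕ → Ω → (Fin p → ℕ))
    (hξmeas : ∀ k j i, Measurable (ξ k j i)) (hεmeas : ∀ k, Measurable (ε k))
    (hindep : iIndepFun
      (Sum.elim (fun q : ℕ × ℕ × Fin p => ξ q.1 q.2.1 q.2.2) ε) μ)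
    (hξid : ∀ k j i, IdentDistrib (ξ k j i) (ξ 1 1 i) μ μ)
    (hεid : ∀ k, IdentDistrib (ε k) (ε 1) μ μ)
    (hξ2 : ∀ i t, Integrable (fun ω => ((ξ 1 1 i ω t : ℕ) : ℝ) ^ 2) μ)
    (hε2 : ∀ t, Integrable (fun ω => ((ε 1 ω t : ℕ) : ℝ) ^ 2) μ)
    (A : Matrix (Fin p) (Fin p) ℝ)
    (hA : ∀ t i, A t i = ∫ ω, ((ξ 1 1 i ω t : ℕ) : ℝ) ∂μ)
    (hlow : ∀ t i : Fin p, t < i → A t i = 0)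
    (hdiag : ∀ i : Fin p, A i i = 1)
    (η : Fin p → ℕ)
    (hη : ∀ i : Fin p,
      η i = sSup {m : ℕ | m ∈ Finset.Icc 1 p ∧ ∃ j : Fin p, 0 < ((A - 1) ^ (m - 1)) i j}) :
    ∀ i : Fin p, ∃ C : ℝ, 0 < C ∧ ∀ k : ℕ, 1 ≤ k →
      |∫ ω, ((gwiX p ξ ε k ω i : ℕ) : ℝ) ∂μ| ≤ C * (k : ℝ) ^ (η i) := by
  classical
  set F : (ℕ × ℕ × Fin p) ⊕ ℕ → Ω → (Fin p → ℕ) :=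
    Sum.elim (fun q : ℕ × ℕ × Fin p => ξ q.1 q.2.1 q.2.2) ε with hF
  have hFmeas : ∀ x, Measurable (F x) := by
    rintro (q | n)
    · exact hξmeas _ _ _
    · exact hεmeas _
  set S : ℕ → Set ((ℕ × ℕ × Fin p) ⊕ ℕ) :=
    fun k => {x | ∀ q : ℕ × ℕ × Fin p, x = Sum.inl q → q.1 ≤ k} with hS
  set G : ℕ → MeasurableSpace Ω :=
    fun k => ⨆ x ∈ S k, MeasurableSpace.comap (F x) inferInstance with hG
  have hGle : ∀ k, G k ≤ ‹MeasurableSpace Ω› := fun k =>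
    iSup₂_le fun x _ => (hFmeas x).comap_le
  have hcoord : ∀ (x) (t : Fin p),
      Measurable[MeasurableSpace.comap (F x) inferInstance] (fun ω => F x ω t) :=
    fun x t => (measurable_pi_apply t).comp (Measurable.of_comap_le le_rfl)
  have hSmono : ∀ k, S k ⊆ S (k+1) := fun k x hx q hq => le_trans (hx q hq) (Nat.le_succ k)
  have hξmem : ∀ k j' i', Sum.inl (k+1, j', i') ∈ S (k+1) := by
    intro k j' i' q hq
    rw [Sum.inl.injEq] at hq
    rw [← hq]
  have hεmem : ∀ k n, Sum.inr n ∈ S k := by intro k n q hq; simp at hq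
  -- measurability wrt past
  have hXmG : ∀ k (t : Fin p), Measurable[G k] (fun ω => gwiX p ξ ε k ω t) := by
    intro k
    induction k with
    | zero => exact fun t => measurable_const
    | succ k ih =>
        intro t
        have hmono : G k ≤ G (k+1) := biSup_mono (hSmono k)
        have hXk : ∀ i', Measurable[G (k+1)] fun ω => gwiX p ξ ε k ω i' :=
          fun i' => (ih i').mono hmono le_rfl
        have hξG : ∀ j' i', Measurable[G (k+1)] fun ω => ξ (k+1) j' i' ω t := by
          intro j' i'
          have h1 : MeasurableSpace.comap (F (Sum.inl (k+1, j', i'))) inferInstance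
              ≤ G (k+1) := le_iSup₂ (f := fun x (_ : x ∈ S (k+1)) =>
                MeasurableSpace.comap (F x) inferInstance) _ (hξmem k j' i')
          exact (hcoord (Sum.inl (k+1, j', i')) t).mono h1 le_rfl
        have hεG : Measurable[G (k+1)] fun ω => ε (k+1) ω t := by
          have h1 : MeasurableSpace.comap (F (Sum.inr (k+1))) inferInstance
              ≤ G (k+1) := le_iSup₂ (f := fun x (_ : x ∈ S (k+1)) =>
                MeasurableSpace.comap (F x) inferInstance) _ (hεmem (k+1) (k+1))
          exact (hcoord (Sum.inr (k+1)) t).mono h1 le_rfl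
        show Measurable[G (k+1)] fun ω =>
          (∑ i : Fin p, ∑ j ∈ Finset.range (gwiX p ξ ε k ω i), ξ (k + 1) (j + 1) i ω t)
            + ε (k + 1) ω t
        refine Measurable.add ?_ hεG
        refine Finset.measurable_sum _ fun i' _ => ?_
        exact meas_rand_sum _ _ (hXk i') (fun j => hξG (j+1) i')
  have hXmeas : ∀ (k : ℕ) (t : Fin p), Measurable (fun ω => gwiX p ξ ε k ω t) :=
    fun k t => (hXmG k t).mono (hGle k) le_rfl
  -- independence
  have hindep' : iIndep (fun x => MeasurableSpace.comap (F x) inferInstance) μ :=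
    (iIndepFun_iff_iIndep _ _ _).mp hindep
  have hkey : ∀ (k : ℕ) (i' i'' : Fin p) (j' : ℕ) (t : Fin p),
      IndepFun (fun ω => gwiX p ξ ε k ω i') (fun ω => ξ (k+1) j' i'' ω t) μ := by
    intro k i' i'' j' t
    have hdisj : Disjoint (S k) ({Sum.inl (k+1, j', i'')} : Set _) := by
      rw [Set.disjoint_singleton_right]
      intro hx
      have := hx (k+1, j', i'') rfl
      omega
    have h1 : Indep (G k) (⨆ x ∈ ({Sum.inl (k+1, j', i'')} : Set _),
        MeasurableSpace.comap (F x) inferInstance) μ :=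
      indep_iSup_of_disjoint (fun x => (hFmeas x).comap_le) hindep' hdisj
    rw [IndepFun_iff_Indep]
    refine indep_of_indep_of_le_right (indep_of_indep_of_le_left h1 ?_) ?_
    · exact (hXmG k i').comap_le
    · have h2 : MeasurableSpace.comap (fun ω => ξ (k+1) j' i'' ω t) inferInstance
          ≤ MeasurableSpace.comap (F (Sum.inl (k+1, j', i''))) inferInstance := by
        have h3 : (fun ω => ξ (k+1) j' i'' ω t)
            = (fun v : Fin p → ℕ => v t) ∘ F (Sum.inl (k+1, j', i'')) := rfl
        rw [h3, ← MeasurableSpace.comap_comp]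
        exact MeasurableSpace.comap_mono (measurable_pi_apply t).comap_le
      refine le_trans h2 ?_
      exact le_iSup₂ (f := fun x (_ : x ∈ ({Sum.inl (k+1, j', i'')} : Set _)) =>
        MeasurableSpace.comap (F x) inferInstance) _ rfl
  -- lintegral notation
  set aE : Fin p → Fin p → ℝ≥0∞ := fun t i' => ∫⁻ ω, ((ξ 1 1 i' ω t : ℕ) : ℝ≥0∞) ∂μ with haEdef
  set cE : Fin p → ℝ≥0∞ := fun t => ∫⁻ ω, ((ε 1 ω t : ℕ) : ℝ≥0∞) ∂μ with hcEdef
  have hcast : Measurable (fun n : ℕ => (n : ℝ≥0∞)) := measurable_of_countable _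
  have hxid : ∀ (k j' : ℕ) (i' t : Fin p),
      ∫⁻ ω, ((ξ k j' i' ω t : ℕ) : ℝ≥0∞) ∂μ = aE t i' := by
    intro k j' i' t
    exact ((hξid k j' i').comp (hcast.comp (measurable_pi_apply t))).lintegral_eq
  have hεid' : ∀ (k : ℕ) (t : Fin p), ∫⁻ ω, ((ε k ω t : ℕ) : ℝ≥0∞) ∂μ = cE t := by
    intro k t
    exact ((hεid k).comp (hcast.comp (measurable_pi_apply t))).lintegral_eq
  -- the recursion for lintegrals
  have hrec : ∀ (k : ℕ) (t : Fin p),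
      ∫⁻ ω, ((gwiX p ξ ε (k+1) ω t : ℕ) : ℝ≥0∞) ∂μ
        = (∑ i' : Fin p, aE t i' * ∫⁻ ω, ((gwiX p ξ ε k ω i' : ℕ) : ℝ≥0∞) ∂μ) + cE t := by
    intro k t
    have hsplit : ∀ ω, ((gwiX p ξ ε (k+1) ω t : ℕ) : ℝ≥0∞)
        = (∑ i' : Fin p,
            ((∑ j ∈ Finset.range (gwiX p ξ ε k ω i'), ξ (k+1) (j+1) i' ω t : ℕ) : ℝ≥0∞))
          + ((ε (k+1) ω t : ℕ) : ℝ≥0∞) := by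
      intro ω
      show (((∑ i : Fin p, ∑ j ∈ Finset.range (gwiX p ξ ε k ω i), ξ (k + 1) (j + 1) i ω t)
        + ε (k + 1) ω t : ℕ) : ℝ≥0∞) = _
      push_cast
      ring
    have hmeas_rs : ∀ i' : Fin p, Measurable (fun ω =>
        ((∑ j ∈ Finset.range (gwiX p ξ ε k ω i'), ξ (k+1) (j+1) i' ω t : ℕ) : ℝ≥0∞)) := by
      intro i'
      exact hcast.comp (meas_rand_sum _ _ (hXmeas k i')
        (fun j => (measurable_pi_apply t).comp (hξmeas (k+1) (j+1) i')))
    calc ∫⁻ ω, ((gwiX p ξ ε (k+1) ω t : ℕ) : ℝ≥0∞) ∂μ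
        = ∫⁻ ω, ((∑ i' : Fin p,
            ((∑ j ∈ Finset.range (gwiX p ξ ε k ω i'), ξ (k+1) (j+1) i' ω t : ℕ) : ℝ≥0∞))
          + ((ε (k+1) ω t : ℕ) : ℝ≥0∞)) ∂μ := lintegral_congr hsplit
      _ = (∑ i' : Fin p, ∫⁻ ω,
            ((∑ j ∈ Finset.range (gwiX p ξ ε k ω i'), ξ (k+1) (j+1) i' ω t : ℕ) : ℝ≥0∞) ∂μ)
          + ∫⁻ ω, ((ε (k+1) ω t : ℕ) : ℝ≥0∞) ∂μ := by
          have hεm : Measurable fun ω => ((ε (k+1) ω t : ℕ) : ℝ≥0∞) :=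
            hcast.comp ((measurable_pi_apply t).comp (hεmeas (k+1)))
          rw [lintegral_add_right _ hεm, lintegral_finset_sum _ (fun i' _ => hmeas_rs i')]
      _ = (∑ i' : Fin p, aE t i' * ∫⁻ ω, ((gwiX p ξ ε k ω i' : ℕ) : ℝ≥0∞) ∂μ) + cE t := by
          rw [hεid' (k+1) t]
          congr 1
          refine Finset.sum_congr rfl fun i' _ => ?_
          exact lintegral_rand_sum _ _ (hXmeas k i')
            (fun j => (measurable_pi_apply t).comp (hξmeas (k+1) (j+1) i'))
            (fun j => hkey k i' i' (j+1) t) (aE t i') (fun j => hxid (k+1) (j+1) i' t)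
  -- nonnegativity and integrability facts
  have hAnn : ∀ t i', 0 ≤ A t i' := by
    intro t i'
    rw [hA]
    exact integral_nonneg fun ω => Nat.cast_nonneg _
  set b : Fin p → ℝ := fun t => ∫ ω, ((ε 1 ω t : ℕ) : ℝ) ∂μ with hb
  have hbnn : ∀ t, 0 ≤ b t := fun t => integral_nonneg fun ω => Nat.cast_nonneg _
  have hnormle : ∀ n : ℕ, ‖(n : ℝ)‖ ≤ ‖((n : ℝ)) ^ 2‖ := by
    intro n
    rw [Real.norm_eq_abs, Real.norm_eq_abs, abs_of_nonneg (by positivity),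
      abs_of_nonneg (by positivity)]
    exact_mod_cast Nat.le_self_pow two_ne_zero n
  have hξint : ∀ (i' t : Fin p), Integrable (fun ω => ((ξ 1 1 i' ω t : ℕ) : ℝ)) μ := by
    intro i' t
    refine (hξ2 i' t).mono ?_ (ae_of_all _ fun ω => hnormle _)
    exact ((measurable_of_countable (fun n : ℕ => (n : ℝ))).comp
      ((measurable_pi_apply t).comp (hξmeas 1 1 i'))).aestronglyMeasurable
  have hεint : ∀ t : Fin p, Integrable (fun ω => ((ε 1 ω t : ℕ) : ℝ)) μ := by
    intro t
    refine (hε2 t).mono ?_ (ae_of_all _ fun ω => hnormle _)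
    exact ((measurable_of_countable (fun n : ℕ => (n : ℝ))).comp
      ((measurable_pi_apply t).comp (hεmeas 1))).aestronglyMeasurable
  have haE : ∀ t i', aE t i' = ENNReal.ofReal (A t i') := by
    intro t i'
    rw [hA]
    rw [ofReal_integral_eq_lintegral_ofReal (hξint i' t)
      (ae_of_all _ fun ω => Nat.cast_nonneg _)]
    exact lintegral_congr fun ω => (ENNReal.ofReal_natCast _).symm
  have hcE : ∀ t, cE t = ENNReal.ofReal (b t) := by
    intro t
    rw [hb]
    rw [ofReal_integral_eq_lintegral_ofReal (hεint t)
      (ae_of_all _ fun ω => Nat.cast_nonneg _)]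
    exact lintegral_congr fun ω => (ENNReal.ofReal_natCast _).symm
  -- the real-valued solution of the recursion
  set Er : ℕ → Fin p → ℝ := fun k t => ∑ j ∈ Finset.range k, ((A ^ j).mulVec b) t with hEr
  have hmvnn : ∀ (M : Matrix (Fin p) (Fin p) ℝ), (∀ t j, 0 ≤ M t j) →
      ∀ t, 0 ≤ (M.mulVec b) t := by
    intro M hM t
    simp only [Matrix.mulVec, dotProduct]
    exact Finset.sum_nonneg fun r _ => mul_nonneg (hM t r) (hbnn r)
  have hErnn : ∀ k t, 0 ≤ Er k t :=
    fun k t => Finset.sum_nonneg fun j _ => hmvnn _ (matpow_nonneg A hAnn j) t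
  have hErrec : ∀ k t, Er (k+1) t = (∑ i' : Fin p, A t i' * Er k i') + b t := by
    intro k t
    show ∑ j ∈ Finset.range (k+1), ((A ^ j).mulVec b) t = _
    rw [Finset.sum_range_succ']
    have h0 : ((A ^ 0).mulVec b) t = b t := by rw [pow_zero, Matrix.one_mulVec]
    rw [h0]
    congr 1
    have h1 : ∀ j, ((A ^ (j+1)).mulVec b) t = ∑ i' : Fin p, A t i' * ((A ^ j).mulVec b) i' := by
      intro j
      rw [pow_succ', ← Matrix.mulVec_mulVec]
      rfl
    rw [Finset.sum_congr rfl fun j _ => h1 j, Finset.sum_comm]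
    exact Finset.sum_congr rfl fun i' _ => (Finset.mul_sum _ _ _).symm
  have hE : ∀ k t, ∫⁻ ω, ((gwiX p ξ ε k ω t : ℕ) : ℝ≥0∞) ∂μ = ENNReal.ofReal (Er k t) := by
    intro k
    induction k with
    | zero =>
        intro t
        simp [gwiX, Er]
    | succ k ih =>
        intro t
        rw [hrec k t]
        have : ∀ i' : Fin p, aE t i' * ∫⁻ ω, ((gwiX p ξ ε k ω i' : ℕ) : ℝ≥0∞) ∂μ
            = ENNReal.ofReal (A t i' * Er k i') := by
          intro i'
          rw [ih i', haE t i', ← ENNReal.ofReal_mul (hAnn t i')]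
        rw [Finset.sum_congr rfl fun i' _ => this i', hcE t, hErrec k t,
          ← ENNReal.ofReal_sum_of_nonneg (fun i' _ => mul_nonneg (hAnn t i') (hErnn k i')),
          ← ENNReal.ofReal_add (Finset.sum_nonneg fun i' _ =>
            mul_nonneg (hAnn t i') (hErnn k i')) (hbnn t)]
  -- triangularity of A - 1
  have hN0 : ∀ r j : Fin p, r ≤ j → (A - 1) r j = 0 := by
    intro r j hrj
    rcases lt_or_eq_of_le hrj with h | h
    · rw [Matrix.sub_apply, hlow r j h, Matrix.one_apply_ne (ne_of_lt h), sub_zero]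
    · subst h; rw [Matrix.sub_apply, hdiag r, Matrix.one_apply_eq, sub_self]
  have hNnn : ∀ t j : Fin p, 0 ≤ (A - 1) t j := by
    intro t j
    rcases le_or_gt t j with h | h
    · rw [hN0 t j h]
    · rw [Matrix.sub_apply, Matrix.one_apply_ne (ne_of_gt h), sub_zero]
      exact hAnn t j
  -- per-coordinate bound
  intro i
  have hpbound : BddAbove {m : ℕ | m ∈ Finset.Icc 1 p ∧
      ∃ j : Fin p, 0 < ((A - 1) ^ (m - 1)) i j} :=
    ⟨p, fun x hx => (Finset.mem_Icc.mp hx.1).2⟩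
  have hη1 : 1 ≤ η i := by
    rw [hη i]
    refine le_csSup hpbound ?_
    refine ⟨Finset.mem_Icc.mpr ⟨le_refl 1, i.pos⟩, ⟨i, ?_⟩⟩
    rw [show (1:ℕ) - 1 = 0 from rfl, pow_zero, Matrix.one_apply_eq]
    norm_num
  have hrowzero : ∀ m : ℕ, η i ≤ m → ∀ j' : Fin p, ((A - 1) ^ m) i j' = 0 := by
    intro m hm j'
    rcases le_or_gt p m with hpm | hpm
    · rw [matpow_eq_zero (A - 1) hN0 hpm]; simp
    · by_contra hne
      have hpos : 0 < ((A - 1) ^ m) i j' :=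
        lt_of_le_of_ne (matpow_nonneg (A - 1) hNnn m i j') (Ne.symm hne)
      have hmem : m + 1 ∈ {m : ℕ | m ∈ Finset.Icc 1 p ∧
          ∃ j : Fin p, 0 < ((A - 1) ^ (m - 1)) i j} := by
        refine ⟨Finset.mem_Icc.mpr ⟨by omega, by omega⟩, ⟨j', ?_⟩⟩
        simpa using hpos
      have h4 := le_csSup hpbound hmem
      rw [← hη i] at h4
      omega
  have hterm_nn : ∀ m, 0 ≤ (((A - 1) ^ m).mulVec b) i :=
    fun m => hmvnn _ (matpow_nonneg (A - 1) hNnn m) i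
  have hAj : ∀ j : ℕ, ((A ^ j).mulVec b) i
      = ∑ m ∈ Finset.range (η i), (j.choose m : ℝ) * (((A - 1) ^ m).mulVec b) i := by
    intro j
    have h1 : A ^ j = ∑ m ∈ Finset.range (j+1), (j.choose m : ℝ) • (A - 1) ^ m := by
      conv_lhs => rw [show A = (A - 1) + 1 by abel]
      exact add_one_pow_eq _ j
    rw [h1, sum_smul_mulVec]
    have hzero2 : ∀ m : ℕ, η i ≤ m → (j.choose m : ℝ) * (((A - 1) ^ m).mulVec b) i = 0 := by
      intro m hm
      have h2 : (((A - 1) ^ m).mulVec b) i = 0 := by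
        simp only [Matrix.mulVec, dotProduct]
        exact Finset.sum_eq_zero fun r _ => by rw [hrowzero m hm r, zero_mul]
      rw [h2, mul_zero]
    have hzero3 : ∀ m : ℕ, j + 1 ≤ m → (j.choose m : ℝ) * (((A - 1) ^ m).mulVec b) i = 0 := by
      intro m hm
      rw [Nat.choose_eq_zero_of_lt (by omega), Nat.cast_zero, zero_mul]
    rw [Finset.sum_subset (Finset.range_subset_range.mpr (by omega : j + 1 ≤ j + 1 + η i))
        (fun m _ hm => hzero3 m (by simpa [Finset.mem_range, not_lt] using hm))]
    rw [← Finset.sum_subset (Finset.range_subset_range.mpr (by omega : η i ≤ j + 1 + η i))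
        (fun m _ hm => hzero2 m (by simpa [Finset.mem_range, not_lt] using hm))]
  set CS : ℝ := ∑ m ∈ Finset.range (η i), (((A - 1) ^ m).mulVec b) i with hCS
  have hCSnn : 0 ≤ CS := Finset.sum_nonneg fun m _ => hterm_nn m
  refine ⟨CS + 1, by linarith, fun k hk => ?_⟩
  have hint : ∫ ω, ((gwiX p ξ ε k ω i : ℕ) : ℝ) ∂μ = Er k i := by
    have hXm' : AEStronglyMeasurable (fun ω => ((gwiX p ξ ε k ω i : ℕ) : ℝ)) μ :=
      ((measurable_of_countable (fun n : ℕ => (n : ℝ))).comp (hXmeas k i)).aestronglyMeasurable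
    rw [integral_eq_lintegral_of_nonneg_ae (ae_of_all _ fun ω => Nat.cast_nonneg _) hXm']
    rw [show ∫⁻ ω, ENNReal.ofReal ((gwiX p ξ ε k ω i : ℕ) : ℝ) ∂μ
        = ∫⁻ ω, ((gwiX p ξ ε k ω i : ℕ) : ℝ≥0∞) ∂μ from
      lintegral_congr fun ω => ENNReal.ofReal_natCast _]
    rw [hE k i, ENNReal.toReal_ofReal (hErnn k i)]
  rw [hint, abs_of_nonneg (hErnn k i)]
  have hchoose : ∀ j m : ℕ, j < k → m < η i → (j.choose m : ℝ) ≤ (k:ℝ) ^ (η i - 1) := by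
    intro j m hj hm
    have h1 : j.choose m ≤ k ^ (η i - 1) :=
      le_trans (Nat.choose_le_pow j m) (le_trans (Nat.pow_le_pow_left (le_of_lt hj) m)
        (Nat.pow_le_pow_right hk (by omega)))
    exact_mod_cast h1
  have h5 : (k:ℝ) ^ (η i) = (k:ℝ) * (k:ℝ) ^ (η i - 1) := by
    conv_lhs => rw [show η i = (η i - 1) + 1 by omega]
    rw [pow_succ]; ring
  have hbound : Er k i ≤ (k:ℝ) ^ (η i) * CS := by
    calc Er k i = ∑ j ∈ Finset.range k, ∑ m ∈ Finset.range (η i),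
          (j.choose m : ℝ) * (((A - 1) ^ m).mulVec b) i :=
        Finset.sum_congr rfl fun j _ => hAj j
      _ ≤ ∑ j ∈ Finset.range k, ∑ m ∈ Finset.range (η i),
          (k:ℝ) ^ (η i - 1) * (((A - 1) ^ m).mulVec b) i := by
        refine Finset.sum_le_sum fun j hj => Finset.sum_le_sum fun m hm => ?_
        exact mul_le_mul_of_nonneg_right
          (hchoose j m (Finset.mem_range.mp hj) (Finset.mem_range.mp hm)) (hterm_nn m)
      _ = (k:ℝ) * ((k:ℝ) ^ (η i - 1) * CS) := by
        rw [← Finset.mul_sum, Finset.sum_const, Finset.card_range, nsmul_eq_mul]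
      _ = (k:ℝ) ^ (η i) * CS := by rw [h5]; ring
  calc Er k i ≤ (k:ℝ) ^ (η i) * CS := hbound
    _ ≤ (CS + 1) * (k:ℝ) ^ (η i) := by
      have hknn : (0:ℝ) ≤ (k:ℝ) ^ (η i) := by positivity
      nlinarith
end

section
/- Let (X_k)_{k≥0} be a strongly critical p-type GWI process with X₀ = 0, finite second moments, lower triangular offspring mean matrix A with unit diagonal whose all first-subdiagonal entries a_{j+1,j} are positive, and let r_i := min{ r ≤ i : b_r > 0 } ∨ 1. Then E(X_{k,i}) = b_{r_i} · ((A−I_p)^{i−r_i})_{i,r_i} · C(k, i−r_i+1) + O(k^{i−r_i}) as k → ∞. -/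
open MeasureTheory ProbabilityTheory
open scoped ENNReal Matrix

lemma gwi_aux_meas_sum_range {Ω : Type*} {m : MeasurableSpace Ω} {N : Ω → ℕ} (hN : Measurable[m] N)
    {g : ℕ → Ω → ℕ} (hg : ∀ j, Measurable[m] (g j)) :
    Measurable[m] fun ω => ∑ j ∈ Finset.range (N ω), g j ω := by
  apply measurable_to_countable'
  intro y
  have h : (fun ω => ∑ j ∈ Finset.range (N ω), g j ω) ⁻¹' {y}
      = ⋃ n, (N ⁻¹' {n} ∩ (fun ω => ∑ j ∈ Finset.range n, g j ω) ⁻¹' {y}) := by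
    ext ω
    simp only [Set.mem_preimage, Set.mem_singleton_iff, Set.mem_iUnion, Set.mem_inter_iff]
    constructor
    · intro h; exact ⟨N ω, rfl, h⟩
    · rintro ⟨n, hn, h⟩; rw [← hn] at h; exact h
  rw [h]
  exact MeasurableSet.iUnion fun n =>
    (hN (measurableSet_singleton n)).inter
      ((Finset.measurable_sum _ (fun j _ => hg j)) (measurableSet_singleton y))

lemma gwi_aux_lintegral_nat {Ω : Type*} [MeasurableSpace Ω] (μ : Measure Ω) {N : Ω → ℕ}
    (hN : Measurable N) :
    ∫⁻ ω, (N ω : ℝ≥0∞) ∂μ = ∑' j : ℕ, μ {ω | j < N ω} := by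
  have hpt : ∀ n : ℕ, (n : ℝ≥0∞) = ∑' j : ℕ, if j < n then (1 : ℝ≥0∞) else 0 := by
    intro n
    rw [tsum_eq_sum (s := Finset.range n) (fun j hj => if_neg (by simpa using hj))]
    rw [Finset.sum_congr rfl (fun j hj => if_pos (Finset.mem_range.mp hj))]
    simp
  have hms : ∀ j : ℕ, MeasurableSet {ω | j < N ω} := by
    intro j
    exact hN (MeasurableSpace.measurableSet_top)
  calc ∫⁻ ω, (N ω : ℝ≥0∞) ∂μ
      = ∫⁻ ω, ∑' j : ℕ, Set.indicator {ω | j < N ω} (fun _ => 1) ω ∂μ := by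
        congr 1; funext ω
        rw [hpt (N ω)]
        congr 1; funext j
        simp [Set.indicator_apply, Set.mem_setOf_eq]
    _ = ∑' j : ℕ, ∫⁻ ω, Set.indicator {ω | j < N ω} (fun _ => 1) ω ∂μ :=
        lintegral_tsum (fun j => ((measurable_const).indicator (hms j)).aemeasurable)
    _ = ∑' j : ℕ, μ {ω | j < N ω} := by
        congr 1; funext j; exact lintegral_indicator_one (hms j)

/-- `gwiX` at time `k` is measurable with respect to any σ-algebra making the relevant
`ξ` and `ε` measurable. -/
lemma gwi_aux_gwiX_measurable {Ω : Type*} {m : MeasurableSpace Ω} {p : ℕ}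
    {ξ : ℕ → ℕ → Fin p → Ω → (Fin p → ℕ)} {ε : ℕ → Ω → (Fin p → ℕ)} (K : ℕ)
    (hξ : ∀ k, k ≤ K → ∀ j i, Measurable[m] (ξ k j i))
    (hε : ∀ k, k ≤ K → Measurable[m] (ε k)) :
    ∀ k, k ≤ K → Measurable[m] (gwiX p ξ ε k) := by
  intro k
  induction k with
  | zero => intro _; exact measurable_const
  | succ k ih =>
    intro hk
    have hXk := ih (Nat.le_of_succ_le hk)
    show Measurable[m] fun ω => _
    rw [show (gwiX p ξ ε (k+1)) = fun ω t =>
      (∑ i : Fin p, ∑ j ∈ Finset.range (gwiX p ξ ε k ω i), ξ (k + 1) (j + 1) i ω t)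
        + ε (k + 1) ω t from rfl]
    apply measurable_pi_iff.mpr
    intro t
    apply Measurable.add
    · apply Finset.measurable_sum
      intro i _
      apply gwi_aux_meas_sum_range
      · exact (measurable_pi_apply i).comp hXk
      · intro j
        exact (measurable_pi_apply t).comp (hξ (k+1) hk (j+1) i)
    · exact (measurable_pi_apply t).comp (hε (k+1) hk)

lemma gwi_aux_indepFun {Ω : Type*} [mΩ : MeasurableSpace Ω] (μ : Measure Ω)
    (p : ℕ) (ξ : ℕ → ℕ → Fin p → Ω → (Fin p → ℕ)) (ε : ℕ → Ω → (Fin p → ℕ))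
    (hξmeas : ∀ k j i, Measurable (ξ k j i)) (hεmeas : ∀ k, Measurable (ε k))
    (hindep : iIndepFun
      (Sum.elim (fun q : ℕ × ℕ × Fin p => ξ q.1 q.2.1 q.2.2) ε) μ)
    (k j : ℕ) (i : Fin p) :
    IndepFun (gwiX p ξ ε k) (ξ (k+1) j i) μ := by
  classical
  set mβ : MeasurableSpace (Fin p → ℕ) := inferInstance with hmβ
  set f : (ℕ × ℕ × Fin p) ⊕ ℕ → Ω → (Fin p → ℕ) :=
    Sum.elim (fun q : ℕ × ℕ × Fin p => ξ q.1 q.2.1 q.2.2) ε with hfdef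
  set T : Set ((ℕ × ℕ × Fin p) ⊕ ℕ) :=
    {x | Sum.elim (fun q : ℕ × ℕ × Fin p => q.1 ≤ k) (fun n => n ≤ k) x} with hT
  have hle : ∀ x, mβ.comap (f x) ≤ mΩ := by
    intro x; cases x with
    | inl q => exact measurable_iff_comap_le.mp (hξmeas q.1 q.2.1 q.2.2)
    | inr n => exact measurable_iff_comap_le.mp (hεmeas n)
  have hInd : Indep (⨆ x ∈ T, mβ.comap (f x)) (⨆ x ∈ Tᶜ, mβ.comap (f x)) μ :=
    indep_biSup_compl hle hindep.iIndep T
  rw [IndepFun_iff_Indep]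
  refine indep_of_indep_of_le_left (indep_of_indep_of_le_right hInd ?_) ?_
  · -- comap (ξ (k+1) j i) ≤ ⨆ x ∈ Tᶜ
    have hx : (Sum.inl (k+1, j, i) : (ℕ × ℕ × Fin p) ⊕ ℕ) ∈ Tᶜ := by
      simp [hT]
    exact le_iSup₂ (f := fun x (_ : x ∈ Tᶜ) => mβ.comap (f x)) _ hx
  · -- comap (gwiX p ξ ε k) ≤ ⨆ x ∈ T
    apply measurable_iff_comap_le.mp
    refine gwi_aux_gwiX_measurable k ?_ ?_ k le_rfl
    · intro k' hk' j' i'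
      apply measurable_iff_comap_le.mpr
      have hx : (Sum.inl (k', j', i') : (ℕ × ℕ × Fin p) ⊕ ℕ) ∈ T := by simp [hT, hk']
      exact le_iSup₂ (f := fun x (_ : x ∈ T) => mβ.comap (f x)) _ hx
    · intro k' hk'
      apply measurable_iff_comap_le.mpr
      have hx : (Sum.inr k' : (ℕ × ℕ × Fin p) ⊕ ℕ) ∈ T := by simp [hT, hk']
      exact le_iSup₂ (f := fun x (_ : x ∈ T) => mβ.comap (f x)) _ hx

lemma gwi_aux_step {Ω : Type*} [mΩ : MeasurableSpace Ω] (μ : Measure Ω)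
    (p : ℕ) (ξ : ℕ → ℕ → Fin p → Ω → (Fin p → ℕ)) (ε : ℕ → Ω → (Fin p → ℕ))
    (hξmeas : ∀ k j i, Measurable (ξ k j i)) (hεmeas : ∀ k, Measurable (ε k))
    (hindep : iIndepFun
      (Sum.elim (fun q : ℕ × ℕ × Fin p => ξ q.1 q.2.1 q.2.2) ε) μ)
    (hξid : ∀ k j i, IdentDistrib (ξ k j i) (ξ 1 1 i) μ μ)
    (hεid : ∀ k, IdentDistrib (ε k) (ε 1) μ μ)
    (k : ℕ) (t : Fin p) :
    ∫⁻ ω, (gwiX p ξ ε (k+1) ω t : ℝ≥0∞) ∂μ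
      = (∑ i : Fin p,
          (∫⁻ ω, (ξ 1 1 i ω t : ℝ≥0∞) ∂μ) * ∫⁻ ω, (gwiX p ξ ε k ω i : ℝ≥0∞) ∂μ)
        + ∫⁻ ω, (ε 1 ω t : ℝ≥0∞) ∂μ := by
  classical
  have hX : ∀ k', Measurable (gwiX p ξ ε k') := fun k' =>
    gwi_aux_gwiX_measurable k' (fun m _ j i => hξmeas m j i) (fun m _ => hεmeas m) k' le_rfl
  have hXi : ∀ (k' : ℕ) (i : Fin p), Measurable fun ω => gwiX p ξ ε k' ω i := fun k' i =>
    (measurable_pi_apply i).comp (hX k')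
  have hcast : Measurable (fun n : ℕ => (n : ℝ≥0∞)) := measurable_from_nat
  have hev : ∀ (g : Ω → Fin p → ℕ), Measurable g → ∀ s : Fin p,
      Measurable fun ω => ((g ω s : ℕ) : ℝ≥0∞) :=
    fun g hg s => hcast.comp ((measurable_pi_apply s).comp hg)
  have hεid_eq : ∫⁻ ω, ((ε (k+1) ω t : ℕ) : ℝ≥0∞) ∂μ = ∫⁻ ω, ((ε 1 ω t : ℕ) : ℝ≥0∞) ∂μ :=
    ((hεid (k+1)).comp (hcast.comp (measurable_pi_apply t))).lintegral_eq
  have hξid_eq : ∀ (j : ℕ) (i : Fin p), ∫⁻ ω, ((ξ (k+1) (j+1) i ω t : ℕ) : ℝ≥0∞) ∂μ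
      = ∫⁻ ω, ((ξ 1 1 i ω t : ℕ) : ℝ≥0∞) ∂μ := fun j i =>
    ((hξid (k+1) (j+1) i).comp (hcast.comp (measurable_pi_apply t))).lintegral_eq
  have hbr : ∀ i : Fin p, Measurable fun ω =>
      ∑ j ∈ Finset.range (gwiX p ξ ε k ω i), ξ (k+1) (j+1) i ω t := by
    intro i
    exact gwi_aux_meas_sum_range (hXi k i) (fun j => (measurable_pi_apply t).comp
      (hξmeas (k+1) (j+1) i))
  have hsum_meas : ∀ i : Fin p, Measurable fun ω =>
      ((∑ j ∈ Finset.range (gwiX p ξ ε k ω i), ξ (k+1) (j+1) i ω t : ℕ) : ℝ≥0∞) :=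
    fun i => hcast.comp (hbr i)
  have h1 : ∫⁻ ω, (gwiX p ξ ε (k+1) ω t : ℝ≥0∞) ∂μ
      = (∑ i : Fin p, ∫⁻ ω,
          ((∑ j ∈ Finset.range (gwiX p ξ ε k ω i), ξ (k+1) (j+1) i ω t : ℕ) : ℝ≥0∞) ∂μ)
        + ∫⁻ ω, ((ε (k+1) ω t : ℕ) : ℝ≥0∞) ∂μ := by
    have hpt : ∀ ω, ((gwiX p ξ ε (k+1) ω t : ℕ) : ℝ≥0∞)
        = (∑ i : Fin p,
            ((∑ j ∈ Finset.range (gwiX p ξ ε k ω i), ξ (k+1) (j+1) i ω t : ℕ) : ℝ≥0∞))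
          + ((ε (k+1) ω t : ℕ) : ℝ≥0∞) := by
      intro ω
      show (((∑ i : Fin p, ∑ j ∈ Finset.range (gwiX p ξ ε k ω i), ξ (k + 1) (j + 1) i ω t)
        + ε (k + 1) ω t : ℕ) : ℝ≥0∞) = _
      push_cast
      ring
    rw [lintegral_congr hpt,
      lintegral_add_right _ (hev _ (hεmeas (k+1)) t),
      lintegral_finset_sum _ (fun i _ => hsum_meas i)]
  rw [h1, hεid_eq]
  congr 1
  refine Finset.sum_congr rfl fun i _ => ?_
  have hms : ∀ j : ℕ, MeasurableSet {ω | j < gwiX p ξ ε k ω i} := fun j =>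
    (hXi k i) (MeasurableSpace.measurableSet_top)
  have hind_meas : ∀ j : ℕ, Measurable fun ω =>
      (if j < gwiX p ξ ε k ω i then (1 : ℝ≥0∞) else 0) :=
    fun j => Measurable.ite (hms j) measurable_const measurable_const
  have hmul : ∀ j : ℕ, Measurable (fun ω =>
      (if j < gwiX p ξ ε k ω i then (1 : ℝ≥0∞) else 0)
        * ((ξ (k+1) (j+1) i ω t : ℕ) : ℝ≥0∞)) :=
    fun j => (hind_meas j).mul (hev _ (hξmeas (k+1) (j+1) i) t)
  have hindIF : ∀ j : ℕ, IndepFun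
      (fun ω => if j < gwiX p ξ ε k ω i then (1 : ℝ≥0∞) else 0)
      (fun ω => ((ξ (k+1) (j+1) i ω t : ℕ) : ℝ≥0∞)) μ := by
    intro j
    have h := gwi_aux_indepFun μ p ξ ε hξmeas hεmeas hindep k (j+1) i
    have hφm : Measurable fun v : Fin p → ℕ => if j < v i then (1 : ℝ≥0∞) else 0 :=
      (measurable_from_nat (f := fun n : ℕ => if j < n then (1 : ℝ≥0∞) else 0)).comp
        (measurable_pi_apply i)
    have hψm : Measurable fun v : Fin p → ℕ => ((v t : ℕ) : ℝ≥0∞) :=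
      hcast.comp (measurable_pi_apply t)
    exact h.comp hφm hψm
  have hprod : ∀ j : ℕ, ∫⁻ ω, (if j < gwiX p ξ ε k ω i then (1 : ℝ≥0∞) else 0)
        * ((ξ (k+1) (j+1) i ω t : ℕ) : ℝ≥0∞) ∂μ
      = μ {ω | j < gwiX p ξ ε k ω i} * ∫⁻ ω, ((ξ 1 1 i ω t : ℕ) : ℝ≥0∞) ∂μ := by
    intro j
    have := lintegral_mul_eq_lintegral_mul_lintegral_of_indepFun
      (f := fun ω => if j < gwiX p ξ ε k ω i then (1 : ℝ≥0∞) else 0)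
      (g := fun ω => ((ξ (k+1) (j+1) i ω t : ℕ) : ℝ≥0∞))
      (hind_meas j) (hev _ (hξmeas (k+1) (j+1) i) t) (hindIF j)
    rw [show (∫⁻ ω, (if j < gwiX p ξ ε k ω i then (1 : ℝ≥0∞) else 0)
        * ((ξ (k+1) (j+1) i ω t : ℕ) : ℝ≥0∞) ∂μ)
      = ∫⁻ ω, ((fun ω => if j < gwiX p ξ ε k ω i then (1 : ℝ≥0∞) else 0)
          * fun ω => ((ξ (k+1) (j+1) i ω t : ℕ) : ℝ≥0∞)) ω ∂μ from rfl, this, hξid_eq j i]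
    congr 1
    rw [show (fun ω => if j < gwiX p ξ ε k ω i then (1 : ℝ≥0∞) else 0)
        = Set.indicator {ω | j < gwiX p ξ ε k ω i} (fun _ => 1) from by
        funext ω; simp [Set.indicator_apply, Set.mem_setOf_eq]]
    exact lintegral_indicator_one (hms j)
  calc ∫⁻ ω, ((∑ j ∈ Finset.range (gwiX p ξ ε k ω i), ξ (k+1) (j+1) i ω t : ℕ) : ℝ≥0∞) ∂μ
      = ∫⁻ ω, ∑' j : ℕ, (if j < gwiX p ξ ε k ω i then (1 : ℝ≥0∞) else 0)
          * ((ξ (k+1) (j+1) i ω t : ℕ) : ℝ≥0∞) ∂μ := by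
        refine lintegral_congr fun ω => ?_
        rw [Nat.cast_sum]
        rw [tsum_eq_sum (s := Finset.range (gwiX p ξ ε k ω i))
          (fun j hj => by rw [if_neg (by simpa using hj), zero_mul])]
        exact Finset.sum_congr rfl fun j hj => by
          rw [if_pos (Finset.mem_range.mp hj), one_mul]
    _ = ∑' j : ℕ, ∫⁻ ω, (if j < gwiX p ξ ε k ω i then (1 : ℝ≥0∞) else 0)
          * ((ξ (k+1) (j+1) i ω t : ℕ) : ℝ≥0∞) ∂μ :=
        lintegral_tsum fun j => (hmul j).aemeasurable
    _ = ∑' j : ℕ, μ {ω | j < gwiX p ξ ε k ω i} * ∫⁻ ω, ((ξ 1 1 i ω t : ℕ) : ℝ≥0∞) ∂μ :=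
        tsum_congr hprod
    _ = (∫⁻ ω, ((ξ 1 1 i ω t : ℕ) : ℝ≥0∞) ∂μ) * ∫⁻ ω, (gwiX p ξ ε k ω i : ℝ≥0∞) ∂μ := by
        rw [ENNReal.tsum_mul_right, gwi_aux_lintegral_nat μ (hXi k i), mul_comm]

lemma gwi_aux_geom_choose {p : ℕ} (A : Matrix (Fin p) (Fin p) ℝ) (k : ℕ) :
    ∑ j ∈ Finset.range k, A ^ j
      = ∑ m ∈ Finset.range k, ((k.choose (m+1) : ℕ) : Matrix (Fin p) (Fin p) ℝ) * (A - 1) ^ m := by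
  induction k with
  | zero => simp
  | succ k ih =>
    rw [Finset.sum_range_succ, ih]
    have hA : A ^ k = ∑ m ∈ Finset.range (k+1),
        ((k.choose m : ℕ) : Matrix (Fin p) (Fin p) ℝ) * (A - 1) ^ m := by
      conv_lhs => rw [show A = (A - 1) + 1 from by rw [sub_add_cancel]]
      rw [Commute.add_pow (Commute.one_right _)]
      refine Finset.sum_congr rfl fun m _ => ?_
      rw [one_pow, mul_one, (Nat.cast_commute (k.choose m) ((A - 1) ^ m)).eq]
    have hext : ∑ m ∈ Finset.range k,
        ((k.choose (m+1) : ℕ) : Matrix (Fin p) (Fin p) ℝ) * (A - 1) ^ m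
      = ∑ m ∈ Finset.range (k+1),
        ((k.choose (m+1) : ℕ) : Matrix (Fin p) (Fin p) ℝ) * (A - 1) ^ m := by
      rw [Finset.sum_range_succ, Nat.choose_succ_self, Nat.cast_zero, zero_mul, add_zero]
    rw [hA, hext, ← Finset.sum_add_distrib]
    refine Finset.sum_congr rfl fun m hm => ?_
    rw [Nat.choose_succ_succ, Nat.cast_add, add_mul, add_comm]

lemma gwi_aux_Npow_zero {p : ℕ} (N : Matrix (Fin p) (Fin p) ℝ)
    (hN : ∀ t i : Fin p, (t : ℕ) < (i : ℕ) + 1 → N t i = 0) :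
    ∀ (m : ℕ) (t i : Fin p), (t : ℕ) < (i : ℕ) + m → (N ^ m) t i = 0 := by
  intro m
  induction m with
  | zero =>
    intro t i h
    simp only [Nat.add_zero] at h
    rw [pow_zero, Matrix.one_apply_ne]
    exact fun he => absurd (congrArg (Fin.val) he) (by omega)
  | succ m ih =>
    intro t i h
    rw [pow_succ', Matrix.mul_apply]
    refine Finset.sum_eq_zero fun s _ => ?_
    by_cases hs : (t : ℕ) < (s : ℕ) + 1
    · rw [hN t s hs, zero_mul]
    · rw [ih s i (by omega), mul_zero]

/-- For a strongly critical `p`-type GWI process with `X₀ = 0`, finite second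
moments, lower triangular offspring mean matrix `A` with unit diagonal and positive
first-subdiagonal entries, with `r_i := (min{ r ≤ i : b_r > 0 }) ∨ 1`,
`E(X_{k,i}) = b_{r_i} ((A-I)^{i-r_i})_{i,r_i} C(k, i-r_i+1) + O(k^{i-r_i})`. -/
theorem gwi_mean_asymptotics {Ω : Type*} [MeasurableSpace Ω]
    (μ : Measure Ω) [IsProbabilityMeasure μ]
    (p : ℕ) (ξ : ℕ → ℕ → Fin p → Ω → (Fin p → ℕ)) (ε : ℕ → Ω → (Fin p → ℕ))
    (hξmeas : ∀ k j i, Measurable (ξ k j i)) (hεmeas : ∀ k, Measurable (ε k))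
    (hindep : iIndepFun
      (Sum.elim (fun q : ℕ × ℕ × Fin p => ξ q.1 q.2.1 q.2.2) ε) μ)
    (hξid : ∀ k j i, IdentDistrib (ξ k j i) (ξ 1 1 i) μ μ)
    (hεid : ∀ k, IdentDistrib (ε k) (ε 1) μ μ)
    (hξ2 : ∀ i t, Integrable (fun ω => ((ξ 1 1 i ω t : ℕ) : ℝ) ^ 2) μ)
    (hε2 : ∀ t, Integrable (fun ω => ((ε 1 ω t : ℕ) : ℝ) ^ 2) μ)
    (A : Matrix (Fin p) (Fin p) ℝ)
    (hA : ∀ t i, A t i = ∫ ω, ((ξ 1 1 i ω t : ℕ) : ℝ) ∂μ)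
    (hlow : ∀ t i : Fin p, t < i → A t i = 0)
    (hdiag : ∀ i : Fin p, A i i = 1)
    (hsub : ∀ (j : ℕ) (hj : j + 1 < p), 0 < A ⟨j + 1, hj⟩ ⟨j, Nat.lt_of_succ_lt hj⟩)
    (b : Fin p → ℝ) (hb : ∀ t, b t = ∫ ω, ((ε 1 ω t : ℕ) : ℝ) ∂μ)
    (r : Fin p → Fin p)
    (hr : ∀ i : Fin p,
      r i = if h : (Finset.univ.filter fun q : Fin p => q ≤ i ∧ 0 < b q).Nonempty
            then (Finset.univ.filter fun q : Fin p => q ≤ i ∧ 0 < b q).min' h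
            else ⟨0, i.pos⟩) :
    ∀ i : Fin p, ∃ C : ℝ, ∀ k : ℕ, 1 ≤ k →
      |(∫ ω, ((gwiX p ξ ε k ω i : ℕ) : ℝ) ∂μ)
          - b (r i) * ((A - 1) ^ ((i : ℕ) - (r i : ℕ))) i (r i)
            * (k.choose ((i : ℕ) - (r i : ℕ) + 1) : ℝ)|
        ≤ C * (k : ℝ) ^ ((i : ℕ) - (r i : ℕ)) := by
  classical
  -- measurability of the process
  have hX : ∀ k', Measurable (gwiX p ξ ε k') := fun k' =>
    gwi_aux_gwiX_measurable k' (fun m _ j i => hξmeas m j i) (fun m _ => hεmeas m) k' le_rfl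
  have hXi : ∀ (k' : ℕ) (i : Fin p), Measurable fun ω => gwiX p ξ ε k' ω i := fun k' i =>
    (measurable_pi_apply i).comp (hX k')
  have hcastR : Measurable (fun n : ℕ => (n : ℝ)) := measurable_from_nat
  -- integrability of the first moments
  have hnat_le : ∀ n : ℕ, ((n : ℝ)) ≤ (n : ℝ) ^ 2 + 1 := by
    intro n; nlinarith [sq_nonneg ((n : ℝ) - 1)]
  have hξint : ∀ i t, Integrable (fun ω => ((ξ 1 1 i ω t : ℕ) : ℝ)) μ := by
    intro i t
    refine Integrable.mono ((hξ2 i t).add (integrable_const 1))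
      ((hcastR.comp ((measurable_pi_apply t).comp (hξmeas 1 1 i))).aestronglyMeasurable)
      (ae_of_all μ fun ω => ?_)
    simp only [Pi.add_apply, Real.norm_eq_abs]
    rw [abs_of_nonneg (by positivity), abs_of_nonneg (by positivity)]
    exact hnat_le _
  have hεint : ∀ t, Integrable (fun ω => ((ε 1 ω t : ℕ) : ℝ)) μ := by
    intro t
    refine Integrable.mono ((hε2 t).add (integrable_const 1))
      ((hcastR.comp ((measurable_pi_apply t).comp (hεmeas 1))).aestronglyMeasurable)
      (ae_of_all μ fun ω => ?_)
    simp only [Pi.add_apply, Real.norm_eq_abs]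
    rw [abs_of_nonneg (by positivity), abs_of_nonneg (by positivity)]
    exact hnat_le _
  -- nonnegativity
  have hbnn : ∀ t, 0 ≤ b t := fun t => by
    rw [hb t]; exact integral_nonneg fun ω => by positivity
  have hAnn : ∀ t i, 0 ≤ A t i := fun t i => by
    rw [hA t i]; exact integral_nonneg fun ω => by positivity
  -- lintegral quantities
  set Lξ : Fin p → Fin p → ℝ≥0∞ := fun i t => ∫⁻ ω, (ξ 1 1 i ω t : ℝ≥0∞) ∂μ with hLξdef
  set Lb : Fin p → ℝ≥0∞ := fun t => ∫⁻ ω, (ε 1 ω t : ℝ≥0∞) ∂μ with hLbdef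
  set L : ℕ → Fin p → ℝ≥0∞ := fun k i => ∫⁻ ω, (gwiX p ξ ε k ω i : ℝ≥0∞) ∂μ with hLdef
  have hLξ : ∀ i t, Lξ i t = ENNReal.ofReal (A t i) := by
    intro i t
    rw [hA t i, ofReal_integral_eq_lintegral_ofReal (hξint i t)
      (ae_of_all μ fun ω => by positivity)]
    exact lintegral_congr fun ω => by rw [ENNReal.ofReal_natCast]
  have hLb : ∀ t, Lb t = ENNReal.ofReal (b t) := by
    intro t
    rw [hb t, ofReal_integral_eq_lintegral_ofReal (hεint t)
      (ae_of_all μ fun ω => by positivity)]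
    exact lintegral_congr fun ω => by rw [ENNReal.ofReal_natCast]
  have hL0 : ∀ i, L 0 i = 0 := by
    intro i
    simp only [hLdef]
    have h0 : (fun ω => ((gwiX p ξ ε 0 ω i : ℕ) : ℝ≥0∞)) = fun _ => 0 := by
      funext ω; simp [gwiX]
    rw [h0]
    exact lintegral_zero
  have hLrec : ∀ k t, L (k+1) t = (∑ i : Fin p, Lξ i t * L k i) + Lb t := fun k t =>
    gwi_aux_step μ p ξ ε hξmeas hεmeas hindep hξid hεid k t
  have hLfin : ∀ k i, L k i ≠ ⊤ := by
    intro k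
    induction k with
    | zero => intro i; rw [hL0 i]; exact ENNReal.zero_ne_top
    | succ k ih =>
      intro t
      rw [hLrec k t, hLb t]
      refine ENNReal.add_ne_top.mpr ⟨?_, ENNReal.ofReal_ne_top⟩
      refine (ENNReal.sum_lt_top.mpr fun i _ => ?_).ne
      rw [hLξ i t]
      exact ENNReal.mul_lt_top ENNReal.ofReal_lt_top (ih i).lt_top
  -- real expectations
  set E : ℕ → Fin p → ℝ := fun k t => ∫ ω, ((gwiX p ξ ε k ω t : ℕ) : ℝ) ∂μ with hEdef
  have hE : ∀ k t, E k t = (L k t).toReal := by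
    intro k t
    simp only [hEdef, hLdef]
    have hmeas : AEStronglyMeasurable (fun ω => ((gwiX p ξ ε k ω t : ℕ) : ℝ)) μ :=
      (hcastR.comp ((measurable_pi_apply t).comp (hX k))).aestronglyMeasurable
    rw [integral_eq_lintegral_of_nonneg_ae (ae_of_all μ fun ω => by positivity) hmeas]
    congr 1
    exact lintegral_congr fun ω => by rw [ENNReal.ofReal_natCast]
  have hErec : ∀ k t, E (k+1) t = (∑ i : Fin p, A t i * E k i) + b t := by
    intro k t
    rw [hE (k+1) t, hLrec k t, hLb t]
    rw [ENNReal.toReal_add (ENNReal.sum_lt_top.mpr fun i _ => by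
        rw [hLξ i t]; exact ENNReal.mul_lt_top ENNReal.ofReal_lt_top (hLfin k i).lt_top).ne
      ENNReal.ofReal_ne_top]
    rw [ENNReal.toReal_sum (fun i _ => by
        rw [hLξ i t]
        exact (ENNReal.mul_lt_top ENNReal.ofReal_lt_top (hLfin k i).lt_top).ne)]
    rw [ENNReal.toReal_ofReal (hbnn t)]
    congr 1
    refine Finset.sum_congr rfl fun i _ => ?_
    rw [ENNReal.toReal_mul, hLξ i t, ENNReal.toReal_ofReal (hAnn t i), hE k i]
  have hE0 : ∀ t, E 0 t = 0 := by
    intro t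
    simp only [hEdef]
    have h0 : (fun ω => ((gwiX p ξ ε 0 ω t : ℕ) : ℝ)) = fun _ => (0 : ℝ) := by
      funext ω; simp [gwiX]
    rw [h0]
    exact integral_zero Ω ℝ
  -- closed form for expectations
  have hEform : ∀ k, E k = fun t => ((∑ j ∈ Finset.range k, A ^ j) *ᵥ b) t := by
    intro k
    induction k with
    | zero => funext t; rw [hE0 t]; simp
    | succ k ih =>
      funext t
      rw [hErec k t, ih, geom_sum_succ, Matrix.add_mulVec, Matrix.one_mulVec,
        ← Matrix.mulVec_mulVec]
      try congr 1
      try simp [Matrix.mulVec, Matrix.dotProduct]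
  -- the nilpotent part
  set N : Matrix (Fin p) (Fin p) ℝ := A - 1 with hNdef
  have hNz : ∀ t i : Fin p, (t : ℕ) < (i : ℕ) + 1 → N t i = 0 := by
    intro t i ht
    rcases Nat.lt_or_ge (t : ℕ) (i : ℕ) with h | h
    · have : t < i := h
      simp [hNdef, Matrix.sub_apply, hlow t i this, Matrix.one_apply_ne (Fin.ne_of_lt this)]
    · have : t = i := Fin.ext (by omega)
      subst this
      simp [hNdef, Matrix.sub_apply, hdiag t, Matrix.one_apply_eq]
  have hNpow := gwi_aux_Npow_zero N hNz
  -- fix i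
  intro i
  set d : ℕ := (i : ℕ) - (r i : ℕ) with hddef
  have hri_le : r i ≤ i := by
    rw [hr i]
    split
    · next h => exact (Finset.mem_filter.mp (Finset.min'_mem _ h)).2.1
    · exact Fin.mk_le_of_le_val (Nat.zero_le _)
  have hdi : (r i : ℕ) + d = (i : ℕ) := Nat.add_sub_cancel' hri_le
  have hble : ∀ q : Fin p, q ≤ i → 0 < b q → r i ≤ q := by
    intro q hqi hpos
    rw [hr i]
    have hne : (Finset.univ.filter fun q : Fin p => q ≤ i ∧ 0 < b q).Nonempty :=
      ⟨q, by simp [hqi, hpos]⟩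
    rw [dif_pos hne]
    exact Finset.min'_le _ _ (by simp [hqi, hpos])
  have hb0 : ∀ q : Fin p, q < r i → b q = 0 := by
    intro q hq
    by_contra h0
    have hpos : 0 < b q := lt_of_le_of_ne (hbnn q) (Ne.symm h0)
    exact absurd hq (not_lt.mpr (hble q (le_trans hq.le hri_le) hpos))
  set c : ℕ → ℝ := fun m => ∑ q : Fin p, (N ^ m) i q * b q with hcdef
  have hentry : ∀ (k m : ℕ) (q : Fin p),
      (((k.choose (m+1) : ℕ) : Matrix (Fin p) (Fin p) ℝ) * (A - 1) ^ m) i q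
        = (k.choose (m+1) : ℝ) * ((A - 1) ^ m) i q := by
    intro k m q
    rw [← nsmul_eq_mul, Matrix.smul_apply, nsmul_eq_mul]
  have hek : ∀ k : ℕ, E k i = ∑ m ∈ Finset.range k, (k.choose (m+1) : ℝ) * c m := by
    intro k
    have h1 : E k i = ∑ q : Fin p,
        (∑ m ∈ Finset.range k, (k.choose (m+1) : ℝ) * ((A - 1) ^ m) i q) * b q := by
      rw [hEform k]
      simp only [Matrix.mulVec, dotProduct]
      refine Finset.sum_congr rfl fun q _ => ?_
      congr 1
      rw [gwi_aux_geom_choose A k, Matrix.sum_apply]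
      exact Finset.sum_congr rfl fun m _ => hentry k m q
    rw [h1]
    rw [Finset.sum_congr rfl fun q _ => Finset.sum_mul _ _ (b q)]
    rw [Finset.sum_comm]
    refine Finset.sum_congr rfl fun m _ => ?_
    simp only [hcdef, Finset.mul_sum]
    exact Finset.sum_congr rfl fun q _ => by ring
  have hc0 : ∀ m : ℕ, d < m → c m = 0 := by
    intro m hm
    refine Finset.sum_eq_zero fun q _ => ?_
    by_cases hbq : b q = 0
    · rw [hbq, mul_zero]
    · have hpos : 0 < b q := lt_of_le_of_ne (hbnn q) (Ne.symm hbq)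
      by_cases hqi : q ≤ i
      · have hrq : r i ≤ q := hble q hqi hpos
        have : (i : ℕ) < (q : ℕ) + m := by
          have h1 : (r i : ℕ) ≤ (q : ℕ) := hrq
          omega
        rw [hNpow m i q this, zero_mul]
      · have : (i : ℕ) < (q : ℕ) + m := by
          have : (i : ℕ) < (q : ℕ) := lt_of_not_ge hqi
          omega
        rw [hNpow m i q this, zero_mul]
  have hcd : c d = b (r i) * (N ^ d) i (r i) := by
    simp only [hcdef]
    rw [Finset.sum_eq_single (r i)]
    · ring
    · intro q _ hqne
      rcases lt_or_gt_of_ne hqne with hlt | hgt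
      · rw [hb0 q hlt, mul_zero]
      · have : (i : ℕ) < (q : ℕ) + d := by
          have : (r i : ℕ) < (q : ℕ) := hgt
          omega
        rw [hNpow d i q this, zero_mul]
    · intro h; exact absurd (Finset.mem_univ _) h
  -- the constant
  refine ⟨∑ m ∈ Finset.range d, |c m|, ?_⟩
  intro k hk
  have hekk : E k i = ∑ m ∈ Finset.range (d+1), (k.choose (m+1) : ℝ) * c m := by
    rw [hek k]
    rcases le_total k (d+1) with h | h
    · refine Finset.sum_subset (Finset.range_subset_range.mpr h) fun m hm hmk => ?_
      have hkm : k ≤ m := by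
        simp only [Finset.mem_range, not_lt] at hmk
        exact hmk
      rw [Nat.choose_eq_zero_of_lt (by omega), Nat.cast_zero, zero_mul]
    · refine (Finset.sum_subset (Finset.range_subset_range.mpr h) fun m hm hmk => ?_).symm
      have : d + 1 ≤ m := by
        simp only [Finset.mem_range, not_lt] at hmk
        exact hmk
      rw [hc0 m (by omega), mul_zero]
  have hdiff : E k i - b (r i) * (N ^ d) i (r i) * (k.choose (d+1) : ℝ)
      = ∑ m ∈ Finset.range d, (k.choose (m+1) : ℝ) * c m := by
    rw [hekk, Finset.sum_range_succ, hcd]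
    ring
  rw [show (∫ ω, ((gwiX p ξ ε k ω i : ℕ) : ℝ) ∂μ) = E k i from rfl]
  rw [show ((A - 1) ^ ((i : ℕ) - (r i : ℕ))) i (r i) = (N ^ d) i (r i) from rfl]
  rw [show ((i : ℕ) - (r i : ℕ)) = d from rfl] at *
  rw [hdiff]
  calc |∑ m ∈ Finset.range d, (k.choose (m+1) : ℝ) * c m|
      ≤ ∑ m ∈ Finset.range d, |(k.choose (m+1) : ℝ) * c m| := Finset.abs_sum_le_sum_abs _ _
    _ ≤ ∑ m ∈ Finset.range d, |c m| * (k : ℝ) ^ d := by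
        refine Finset.sum_le_sum fun m hm => ?_
        rw [abs_mul, abs_of_nonneg (by positivity), mul_comm]
        refine mul_le_mul_of_nonneg_left ?_ (abs_nonneg _)
        calc ((k.choose (m+1) : ℕ) : ℝ) ≤ ((k ^ (m+1) : ℕ) : ℝ) :=
              Nat.cast_le.mpr (Nat.choose_le_pow _ _)
          _ = (k : ℝ) ^ (m+1) := by push_cast; ring
          _ ≤ (k : ℝ) ^ d := by
              refine pow_le_pow_right₀ (by exact_mod_cast hk) ?_
              have := Finset.mem_range.mp hm
              omega
    _ = (∑ m ∈ Finset.range d, |c m|) * (k : ℝ) ^ d := by rw [Finset.sum_mul]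
end
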